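/- With the same notation (A² > 0, ρ > 0), the momenta satisfy P² = ρ²(ε/2 + 1)²(|Y'|² − εT'²), where ε = |Ẏ⊥|²|Y'|²/A². -/

import Mathlib

open scoped RealInnerProductSpace

theorem stmt14 {n : ℕ} (ρ td ts : ℝ) (u v : EuclideanSpace ℝ (Fin n)) (hv : v ≠ 0)
    (hρ : 0 < ρ)
    (tdperp : ℝ) (uperp : EuclideanSpace ℝ (Fin n)) (A2 ε P : ℝ)
    (Pvec : EuclideanSpace ℝ (Fin n))
    (htd : tdperp = td - (⟪u, v⟫ / ‖v‖ ^ 2) * ts)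
    (hu : uperp = u - (⟪u, v⟫ / ‖v‖ ^ 2) • v)
    (hA2 : A2 = tdperp ^ 2 * ‖v‖ ^ 2 + ts ^ 2 * ‖uperp‖ ^ 2)
    (hApos : 0 < A2)
    (hε : ε = ‖uperp‖ ^ 2 * ‖v‖ ^ 2 / A2)
    (hP : P = -(ρ / Real.sqrt A2) * (ε / 2 + 1) * (tdperp * ‖v‖ ^ 2))
    (hPvec : Pvec = (ρ / Real.sqrt A2) •
      (‖v‖ ^ 2 • uperp - (ε / 2 + 1) • (ts ^ 2 • uperp - (tdperp * ts) • v))) :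
    P ^ 2 = ρ ^ 2 * (ε / 2 + 1) ^ 2 * (‖v‖ ^ 2 - ε * ts ^ 2) := by
  have hAne : A2 ≠ 0 := ne_of_gt hApos
  have hsq : Real.sqrt A2 ^ 2 = A2 := Real.sq_sqrt hApos.le
  have hsne : Real.sqrt A2 ≠ 0 := by positivity
  have key : ‖v‖ ^ 2 - ε * ts ^ 2 = tdperp ^ 2 * ‖v‖ ^ 4 / A2 := by
    rw [hε]; field_simp; linear_combination hA2
  rw [hP, key]
  field_simp
  linear_combination (-(ε + 2) ^ 2 * tdperp ^ 2) * hsq
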